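/- Let p be an odd prime and k ≥ 1, and set q = p^{2k}, n = p^k, s = 1. Then gcd(n, s, q - 1) = 1 and the trinomial x^n + x - 2 ∈ F_q[x] has exactly √q distinct roots in F_q, showing that the bound ⌊1/2 + √(q-1)⌋ on the number of roots of a trinomial with δ = 1 is attained up to the floor. -/

import Mathlib

open Polynomial

theorem stmt8 (p k : ℕ) (hp : p.Prime) (hodd : Odd p) (hk : 1 ≤ k)
    (F : Type*) [Field F] [Fintype F] [DecidableEq F] (hF : Fintype.card F = p ^ (2 * k)) :
    Nat.gcd (p ^ k) (Nat.gcd 1 (Fintype.card F - 1)) = 1 ∧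
    (X ^ p ^ k + X - C 2 : F[X]).roots.toFinset.card = Nat.sqrt (Fintype.card F) ∧
    Nat.sqrt (Fintype.card F) = p ^ k := by
  have hsqrt : Nat.sqrt (Fintype.card F) = p ^ k := by
    rw [hF, mul_comm, pow_mul, Nat.sqrt_eq']
  refine ⟨by simp, ?_, hsqrt⟩
  rw [hsqrt]
  -- char p
  have hcard1 : (1 : ℕ) < Fintype.card F := Fintype.one_lt_card
  haveI : CharP F (ringChar F) := ringChar.charP F
  obtain ⟨m, hm⟩ := FiniteField.card F (ringChar F)
  have hrprime : (ringChar F).Prime := hm.1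
  have hrp : ringChar F = p := by
    have : p ∣ ringChar F ^ (m : ℕ) := by
      rw [← hm.2, hF]
      exact dvd_pow_self p (by omega)
    have := (Nat.Prime.prime hrprime).2.2 -- not needed
    have hpd : p ∣ ringChar F := hp.dvd_of_dvd_pow ‹p ∣ ringChar F ^ (m : ℕ)›
    exact ((Nat.prime_dvd_prime_iff_eq hp hrprime).mp hpd).symm
  haveI hcharp : CharP F p := hrp ▸ ringChar.charP F
  haveI : ExpChar F p := ExpChar.prime hp
  haveI : ExpChar F[X] p := ExpChar.prime hp
  set h : F[X] := X ^ p ^ k + X - C 2 with hh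
  have hpk1 : 1 < p ^ k := Nat.one_lt_pow (by omega) hp.one_lt
  have hpk0 : p ^ k ≠ 0 := by positivity
  -- degree
  have hdeg : h.natDegree = p ^ k := by
    rw [hh]
    compute_degree
    · simp [show ¬ (1 = p ^ k) from by omega, hp.pos.ne']
    · omega
  -- key power identity
  have h2F : (2 : F) ^ p ^ k = 2 := by
    have : ((1 : F) + 1) ^ p ^ k = 1 ^ p ^ k + 1 ^ p ^ k := add_pow_expChar_pow (R := F) p k (x := 1) (y := 1)
    simpa [one_add_one_eq_two] using this
  have hkey : h ^ p ^ k = X ^ p ^ (2 * k) + X ^ p ^ k - C 2 := by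
    have hoddpk : Odd (p ^ k) := hodd.pow
    rw [hh, sub_eq_add_neg, add_pow_expChar_pow, add_pow_expChar_pow, hoddpk.neg_pow,
      ← C_pow, h2F, ← pow_mul, two_mul, pow_add, sub_eq_add_neg]
  have hdvd : h ∣ (X ^ Fintype.card F - X : F[X]) := by
    have : (X ^ Fintype.card F - X : F[X]) = h ^ p ^ k - h := by
      rw [hkey, hF, hh]; ring
    rw [this]
    exact dvd_sub (dvd_pow_self h hpk0) dvd_rfl
  -- separable
  have hsep : h.Separable := by
    have hd : derivative h = 1 := by
      rw [hh]
      have : ((p : F)) = 0 := CharP.cast_eq_zero F p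
      simp [derivative_X_pow, this, Nat.cast_pow, zero_pow (by omega : k ≠ 0)]
    rw [Polynomial.separable_def, hd]
    exact isCoprime_one_right
  have hnodup : h.roots.Nodup := Polynomial.nodup_roots hsep
  -- splits
  have hXq : (X ^ Fintype.card F - X : F[X]).Splits := by
    rw [splits_iff_card_roots, FiniteField.roots_X_pow_card_sub_X,
      FiniteField.X_pow_card_sub_X_natDegree_eq F hcard1]
    simp [Finset.card_univ]
  have hne : (X ^ Fintype.card F - X : F[X]) ≠ 0 :=
    FiniteField.X_pow_card_sub_X_ne_zero F hcard1
  have hsplits : h.Splits :=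
    Polynomial.Splits.of_dvd hXq hne hdvd
  rw [Multiset.toFinset_card_of_nodup hnodup,
    (Polynomial.splits_iff_card_roots).mp hsplits, hdeg]
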